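/- arXiv:2408.14903 — 2 statements merged into one kernel-verified Lean document; each statement's English description precedes it below -/
import Mathlib

section
/- Assume (A1), (A2), let φ: X → ℝ be bounded measurable, let g_s(x) = Σ_{k=0}^∞ (P_s^k φ̄)(x), and suppose the adaptation is weakly (resp. strongly) p-waning for some p > 0. Then A_n/n^p → 0 as n → ∞ in probability (resp. almost surely). -/
open MeasureTheory Filter Finset ProbabilityTheory
open scoped ENNReal NNReal Topology

/-- Total variation distance between two measures: `sup_A |μ(A) - ν(A)|`. -/
noncomputable def tvDist {X : Type*} [MeasurableSpace X] (μ ν : Measure X) : ℝ :=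
  ⨆ A : {A : Set X // MeasurableSet A}, |(μ A.1).toReal - (ν A.1).toReal|

/-- `iterK P s k x` is the `k`-step transition probability `P_s^k(x, ·)`. -/
noncomputable def iterK {S X : Type*} [MeasurableSpace X]
    (P : S → X → Measure X) (s : S) : ℕ → X → Measure X
  | 0 => fun x => Measure.dirac x
  | n + 1 => fun x => (P s x).bind (iterK P s n)

/-- Supremum norm `‖f‖_∞ = sup_x |f x|`. -/
noncomputable def supNorm {X : Type*} (f : X → ℝ) : ℝ := ⨆ x, |f x|

/-- Oscillation `osc(f) = sup_x f x - inf_x f x`. -/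
noncomputable def osc {X : Type*} (f : X → ℝ) : ℝ := (⨆ x, f x) - (⨅ x, f x)

/-- The solution of the Poisson equation: `g_s x = Σ_{k=0}^∞ (P_s^k φ̄)(x)`
where `φ̄ = φ - π(φ)`. -/
noncomputable def gfun {S X : Type*} [MeasurableSpace X]
    (P : S → X → Measure X) (π : Measure X) (φ : X → ℝ) (s : S) (x : X) : ℝ :=
  ∑' k : ℕ, ∫ y, (φ y - ∫ z, φ z ∂π) ∂(iterK P s k x)

/-- `Pg P π φ s x = (P_s g_s)(x)`. -/
noncomputable def Pg {S X : Type*} [MeasurableSpace X]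
    (P : S → X → Measure X) (π : Measure X) (φ : X → ℝ) (s : S) (x : X) : ℝ :=
  ∫ y, gfun P π φ s y ∂(P s x)


/- ### Auxiliary lemmas -/

set_option linter.unusedSectionVars false
set_option linter.unusedVariables false

section TVAux
variable {X : Type*} [MeasurableSpace X]

lemma tv_bdd (μ ν : Measure X) [IsProbabilityMeasure μ] [IsProbabilityMeasure ν] :
    BddAbove (Set.range fun A : {A : Set X // MeasurableSet A} =>
      |(μ A.1).toReal - (ν A.1).toReal|) := by
  refine ⟨1, ?_⟩
  rintro r ⟨A, rfl⟩
  have h1 : (μ A.1).toReal ≤ 1 := by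
    simpa using ENNReal.toReal_mono (by simp) (prob_le_one (μ := μ) (s := A.1))
  have h2 : (ν A.1).toReal ≤ 1 := by
    simpa using ENNReal.toReal_mono (by simp) (prob_le_one (μ := ν) (s := A.1))
  have h3 : 0 ≤ (μ A.1).toReal := ENNReal.toReal_nonneg
  have h4 : 0 ≤ (ν A.1).toReal := ENNReal.toReal_nonneg
  rw [abs_le]; constructor <;> linarith

lemma abs_sub_le_tvDist (μ ν : Measure X) [IsProbabilityMeasure μ] [IsProbabilityMeasure ν]
    {A : Set X} (hA : MeasurableSet A) :
    |(μ A).toReal - (ν A).toReal| ≤ tvDist μ ν :=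
  le_ciSup (tv_bdd μ ν) (⟨A, hA⟩ : {A : Set X // MeasurableSet A})

lemma tvDist_nonneg (μ ν : Measure X) [IsProbabilityMeasure μ] [IsProbabilityMeasure ν] :
    0 ≤ tvDist μ ν := by
  have := abs_sub_le_tvDist μ ν MeasurableSet.empty
  simpa using this

lemma integrable_of_bdd {μ : Measure X} [IsFiniteMeasure μ] {f : X → ℝ} {B : ℝ}
    (hf : Measurable f) (hB : ∀ x, |f x| ≤ B) : Integrable f μ :=
  ⟨hf.aestronglyMeasurable,
    HasFiniteIntegral.of_bounded (C := B) (ae_of_all _ fun x => by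
      simpa [Real.norm_eq_abs] using hB x)⟩

lemma abs_integral_sub_le {μ ν : Measure X} [IsProbabilityMeasure μ] [IsProbabilityMeasure ν]
    {f : X → ℝ} {B : ℝ} (hf : Measurable f) (hB : ∀ x, |f x| ≤ B) :
    |∫ x, f x ∂μ - ∫ x, f x ∂ν| ≤ 2 * B * tvDist μ ν := by
  obtain ⟨s, hs, h1, h2⟩ := hahn_decomposition (μ := μ) (ν := ν)
  have hfμ : Integrable f μ := integrable_of_bdd hf hB
  have hfν : Integrable f ν := integrable_of_bdd hf hB
  have hle1 : ν.restrict s ≤ μ.restrict s := by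
    refine Measure.le_iff.2 fun A hA => ?_
    rw [Measure.restrict_apply hA, Measure.restrict_apply hA]
    exact h1 _ (hA.inter hs) Set.inter_subset_right
  have hle2 : μ.restrict sᶜ ≤ ν.restrict sᶜ := by
    refine Measure.le_iff.2 fun A hA => ?_
    rw [Measure.restrict_apply hA, Measure.restrict_apply hA]
    exact h2 _ (hA.inter hs.compl) Set.inter_subset_right
  set d1 := μ.restrict s - ν.restrict s with hd1
  set d2 := ν.restrict sᶜ - μ.restrict sᶜ with hd2
  have hfin1 : IsFiniteMeasure d1 := isFiniteMeasure_of_le (μ.restrict s) Measure.sub_le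
  have hfin2 : IsFiniteMeasure d2 := isFiniteMeasure_of_le (ν.restrict sᶜ) Measure.sub_le
  have hint1 : Integrable f d1 := integrable_of_bdd hf hB
  have hint2 : Integrable f d2 := integrable_of_bdd hf hB
  have hsplit1 : ∫ x in s, f x ∂μ = ∫ x, f x ∂d1 + ∫ x in s, f x ∂ν := by
    rw [← integral_add_measure hint1 hfν.restrict, hd1,
      Measure.sub_add_cancel_of_le hle1]
  have hsplit2 : ∫ x in sᶜ, f x ∂ν = ∫ x, f x ∂d2 + ∫ x in sᶜ, f x ∂μ := by
    rw [← integral_add_measure hint2 hfμ.restrict, hd2,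
      Measure.sub_add_cancel_of_le hle2]
  have key : ∫ x, f x ∂μ - ∫ x, f x ∂ν = ∫ x, f x ∂d1 - ∫ x, f x ∂d2 := by
    rw [← integral_add_compl hs hfμ, ← integral_add_compl hs hfν, hsplit1, hsplit2]
    ring
  have hX : Nonempty X := MeasureTheory.Measure.nonempty_of_neZero μ
  have hB0 : 0 ≤ B := le_trans (abs_nonneg _) (hB hX.some)
  have hd1u : (d1 Set.univ).toReal ≤ tvDist μ ν := by
    have happ : d1 Set.univ = μ s - ν s := by
      rw [hd1, Measure.sub_apply MeasurableSet.univ hle1]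
      simp [Measure.restrict_apply_univ]
    rw [happ, ENNReal.toReal_sub_of_le (h1 s hs subset_rfl) (measure_ne_top μ s)]
    calc (μ s).toReal - (ν s).toReal ≤ |(μ s).toReal - (ν s).toReal| := le_abs_self _
    _ ≤ tvDist μ ν := abs_sub_le_tvDist μ ν hs
  have hd2u : (d2 Set.univ).toReal ≤ tvDist μ ν := by
    have happ : d2 Set.univ = ν sᶜ - μ sᶜ := by
      rw [hd2, Measure.sub_apply MeasurableSet.univ hle2]
      simp [Measure.restrict_apply_univ]
    rw [happ, ENNReal.toReal_sub_of_le (h2 sᶜ hs.compl subset_rfl) (measure_ne_top ν sᶜ)]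
    calc (ν sᶜ).toReal - (μ sᶜ).toReal ≤ |(ν sᶜ).toReal - (μ sᶜ).toReal| := le_abs_self _
    _ = |(μ sᶜ).toReal - (ν sᶜ).toReal| := abs_sub_comm _ _
    _ ≤ tvDist μ ν := abs_sub_le_tvDist μ ν hs.compl
  have hb1 : |∫ x, f x ∂d1| ≤ B * tvDist μ ν := by
    have := norm_integral_le_of_norm_le_const (μ := d1) (f := f) (C := B)
      (ae_of_all _ fun x => by simpa [Real.norm_eq_abs] using hB x)
    rw [Real.norm_eq_abs] at this
    calc |∫ x, f x ∂d1| ≤ B * (d1 Set.univ).toReal := this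
    _ ≤ B * tvDist μ ν := mul_le_mul_of_nonneg_left hd1u hB0
  have hb2 : |∫ x, f x ∂d2| ≤ B * tvDist μ ν := by
    have := norm_integral_le_of_norm_le_const (μ := d2) (f := f) (C := B)
      (ae_of_all _ fun x => by simpa [Real.norm_eq_abs] using hB x)
    rw [Real.norm_eq_abs] at this
    calc |∫ x, f x ∂d2| ≤ B * (d2 Set.univ).toReal := this
    _ ≤ B * tvDist μ ν := mul_le_mul_of_nonneg_left hd2u hB0
  calc |∫ x, f x ∂μ - ∫ x, f x ∂ν| = |∫ x, f x ∂d1 - ∫ x, f x ∂d2| := by rw [key]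
  _ ≤ |∫ x, f x ∂d1| + |∫ x, f x ∂d2| := abs_sub _ _
  _ ≤ B * tvDist μ ν + B * tvDist μ ν := add_le_add hb1 hb2
  _ = 2 * B * tvDist μ ν := by ring

lemma lintegral_le_of_bdd {μ : Measure X} [IsProbabilityMeasure μ] {B : ℝ}
    (g : X → ℝ≥0∞) (hg : ∀ x, g x ≤ ENNReal.ofReal B) :
    ∫⁻ x, g x ∂μ ≤ ENNReal.ofReal B := by
  calc ∫⁻ x, g x ∂μ ≤ ∫⁻ _, ENNReal.ofReal B ∂μ := lintegral_mono hg
  _ = ENNReal.ofReal B := by simp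

/-- Bochner integral over `μ.bind κ` for a measurable family of probability measures. -/
lemma integral_bind_bdd {μ : Measure X} [IsProbabilityMeasure μ] (κ : X → Measure X)
    (hκm : Measurable κ) (hκp : ∀ x, IsProbabilityMeasure (κ x))
    {f : X → ℝ} {B : ℝ} (hf : Measurable f) (hB : ∀ x, |f x| ≤ B) :
    ∫ y, f y ∂(μ.bind κ) = ∫ x, ∫ y, f y ∂(κ x) ∂μ := by
  have hbp : IsProbabilityMeasure (μ.bind κ) := by
    constructor
    rw [Measure.bind_apply MeasurableSet.univ hκm.aemeasurable]
    simp [fun x => (hκp x).measure_univ]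
  have hfb : Integrable f (μ.bind κ) := integrable_of_bdd hf hB
  have hmp : Measurable fun x => ∫⁻ y, ENNReal.ofReal (f y) ∂(κ x) :=
    (Measure.measurable_lintegral (hf.ennreal_ofReal)).comp hκm
  have hmn : Measurable fun x => ∫⁻ y, ENNReal.ofReal (-f y) ∂(κ x) :=
    (Measure.measurable_lintegral (hf.neg.ennreal_ofReal)).comp hκm
  have hlep : ∀ x, ∫⁻ y, ENNReal.ofReal (f y) ∂(κ x) ≤ ENNReal.ofReal B := fun x => by
    have := hκp x
    exact lintegral_le_of_bdd _ fun y =>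
      ENNReal.ofReal_le_ofReal (le_trans (le_abs_self _) (hB y))
  have hlen : ∀ x, ∫⁻ y, ENNReal.ofReal (-f y) ∂(κ x) ≤ ENNReal.ofReal B := fun x => by
    have := hκp x
    exact lintegral_le_of_bdd _ fun y =>
      ENNReal.ofReal_le_ofReal (le_trans (neg_le_abs _) (hB y))
  have hfinp : ∀ x, ∫⁻ y, ENNReal.ofReal (f y) ∂(κ x) < ∞ := fun x =>
    lt_of_le_of_lt (hlep x) ENNReal.ofReal_lt_top
  have hfinn : ∀ x, ∫⁻ y, ENNReal.ofReal (-f y) ∂(κ x) < ∞ := fun x =>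
    lt_of_le_of_lt (hlen x) ENNReal.ofReal_lt_top
  rw [integral_eq_lintegral_pos_part_sub_lintegral_neg_part hfb,
    Measure.lintegral_bind hκm.aemeasurable hf.ennreal_ofReal.aemeasurable,
    Measure.lintegral_bind (f := fun y => ENNReal.ofReal (-f y)) hκm.aemeasurable
      hf.neg.ennreal_ofReal.aemeasurable]
  have heq : ∀ x, ∫ y, f y ∂(κ x) =
      (∫⁻ y, ENNReal.ofReal (f y) ∂(κ x)).toReal
        - (∫⁻ y, ENNReal.ofReal (-f y) ∂(κ x)).toReal := fun x => by
    have := hκp x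
    exact integral_eq_lintegral_pos_part_sub_lintegral_neg_part (integrable_of_bdd hf hB)
  rw [integral_congr_ae (ae_of_all _ heq), integral_sub, integral_toReal hmp.aemeasurable
      (ae_of_all _ hfinp), integral_toReal hmn.aemeasurable (ae_of_all _ hfinn)]
  · refine integrable_of_bdd (B := (ENNReal.ofReal B).toReal) hmp.ennreal_toReal fun x => ?_
    rw [abs_of_nonneg ENNReal.toReal_nonneg]
    exact ENNReal.toReal_mono (by simp) (hlep x)
  · refine integrable_of_bdd (B := (ENNReal.ofReal B).toReal) hmn.ennreal_toReal fun x => ?_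
    rw [abs_of_nonneg ENNReal.toReal_nonneg]
    exact ENNReal.toReal_mono (by simp) (hlen x)

lemma measurable_integral_kernel (κ : X → Measure X) (hκm : Measurable κ)
    (hκp : ∀ x, IsProbabilityMeasure (κ x)) {f : X → ℝ} {B : ℝ}
    (hf : Measurable f) (hB : ∀ x, |f x| ≤ B) :
    Measurable fun x => ∫ y, f y ∂(κ x) := by
  have heq : ∀ x, ∫ y, f y ∂(κ x) =
      (∫⁻ y, ENNReal.ofReal (f y) ∂(κ x)).toReal
        - (∫⁻ y, ENNReal.ofReal (-f y) ∂(κ x)).toReal := fun x => by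
    have := hκp x
    exact integral_eq_lintegral_pos_part_sub_lintegral_neg_part (integrable_of_bdd hf hB)
  simp_rw [heq]
  exact (((Measure.measurable_lintegral hf.ennreal_ofReal).comp hκm).ennreal_toReal).sub
    (((Measure.measurable_lintegral hf.neg.ennreal_ofReal).comp hκm).ennreal_toReal)

/-- iterates of a kernel -/
noncomputable def kiter (κ : Kernel X X) : ℕ → Kernel X X
  | 0 => Kernel.id
  | n + 1 => kiter κ n ∘ₖ κ

instance kiter_markov (κ : Kernel X X) [IsMarkovKernel κ] (n : ℕ) :
    IsMarkovKernel (kiter κ n) := by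
  induction n with
  | zero => exact (by infer_instance : IsMarkovKernel (Kernel.id : Kernel X X))
  | succ n ih => exact Kernel.IsMarkovKernel.comp _ _

lemma kiter_zero_apply (κ : Kernel X X) (x : X) : kiter κ 0 x = Measure.dirac x := by
  simp [kiter, Kernel.id, Kernel.deterministic_apply]

lemma kiter_succ_apply (κ : Kernel X X) (n : ℕ) (x : X) :
    kiter κ (n + 1) x = (κ x).bind (kiter κ n) := by
  simp [kiter, Kernel.comp_apply]

lemma iterK_eq_kiter {S : Type*} (P : S → X → Measure X) (s : S) (κ : Kernel X X)
    (hκ : ∀ x, κ x = P s x) (k : ℕ) (x : X) : iterK P s k x = kiter κ k x := by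
  induction k generalizing x with
  | zero => rw [kiter_zero_apply]; rfl
  | succ n ih =>
    show (P s x).bind (iterK P s n) = _
    rw [kiter_succ_apply, hκ x]
    congr 1
    exact funext fun y => ih y

end TVAux

section Gfun
variable {X : Type*} [MeasurableSpace X] (π : Measure X) [IsProbabilityMeasure π]
  (κ : Kernel X X) [IsMarkovKernel κ]
  {φ : X → ℝ} {B C ρ : ℝ} (hφm : Measurable φ) (hφb : ∀ x, |φ x| ≤ B)
  (hB0 : 0 ≤ B) (hC0 : 0 ≤ C) (hρ0 : 0 ≤ ρ) (hρ1 : ρ < 1)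



/-- centered function -/
noncomputable def cent (π : Measure X) (φ : X → ℝ) : X → ℝ := fun x => φ x - ∫ z, φ z ∂π

include hφm hφb hB0 in
lemma cent_bdd : ∀ x, |cent π φ x| ≤ 2 * B := by
  intro x
  have h1 : |∫ z, φ z ∂π| ≤ B := by
    have := norm_integral_le_of_norm_le_const (μ := π) (f := φ) (C := B)
      (ae_of_all _ fun x => by simpa [Real.norm_eq_abs] using hφb x)
    simpa [Real.norm_eq_abs] using this
  have := abs_sub (φ x) (∫ z, φ z ∂π)
  calc |cent π φ x| ≤ |φ x| + |∫ z, φ z ∂π| := abs_sub _ _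
  _ ≤ B + B := add_le_add (hφb x) h1
  _ = 2 * B := by ring

include hφm hφb in
lemma cent_int_pi : ∫ x, cent π φ x ∂π = 0 := by
  have : Integrable φ π := integrable_of_bdd hφm hφb
  simp [cent, integral_sub this (integrable_const _), measure_univ]

include hφm in
lemma cent_meas : Measurable (cent π φ) := hφm.sub measurable_const

/-- the k-th term -/
noncomputable def fterm (π : Measure X) (κ : Kernel X X) (φ : X → ℝ) (k : ℕ) (x : X) : ℝ :=
  ∫ y, cent π φ y ∂(kiter κ k x)

include hφm hφb hB0 in
lemma fterm_meas (k : ℕ) : Measurable (fterm π κ φ k) :=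
  measurable_integral_kernel _ (kiter κ k).measurable
    (fun x => (kiter_markov κ k).isProbabilityMeasure x) (cent_meas π hφm)
    (cent_bdd π hφm hφb hB0)

include hφm hφb hB0 in
lemma fterm_bdd (hA2 : ∀ k x, tvDist (kiter κ k x) π ≤ C * ρ ^ k) (k : ℕ) (x : X) :
    |fterm π κ φ k x| ≤ 4 * B * (C * ρ ^ k) := by
  have hpk : IsProbabilityMeasure (kiter κ k x) := (kiter_markov κ k).isProbabilityMeasure x
  have h1 : |fterm π κ φ k x - ∫ y, cent π φ y ∂π| ≤ 2 * (2 * B) * tvDist (kiter κ k x) π :=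
    abs_integral_sub_le (cent_meas π hφm) (cent_bdd π hφm hφb hB0)
  rw [cent_int_pi π hφm hφb, sub_zero] at h1
  calc |fterm π κ φ k x| ≤ 2 * (2 * B) * tvDist (kiter κ k x) π := h1
  _ ≤ 2 * (2 * B) * (C * ρ ^ k) := by
      refine mul_le_mul_of_nonneg_left (hA2 k x) (by linarith)
  _ = 4 * B * (C * ρ ^ k) := by ring

include hρ0 hρ1 in
lemma geom_summable : Summable fun k : ℕ => 4 * B * (C * ρ ^ k) := by
  simpa [mul_assoc] using ((summable_geometric_of_lt_one hρ0 hρ1).mul_left C).mul_left (4 * B)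

include hφm hφb hB0 hρ0 hρ1 in
lemma fterm_summable (hA2 : ∀ k x, tvDist (kiter κ k x) π ≤ C * ρ ^ k) (x : X) :
    Summable fun k => fterm π κ φ k x := by
  refine Summable.of_abs (Summable.of_nonneg_of_le (fun k => abs_nonneg _)
    (fun k => fterm_bdd π κ hφm hφb hB0 hA2 k x) (geom_summable hρ0 hρ1))


noncomputable def gfun' (π : Measure X) (κ : Kernel X X) (φ : X → ℝ) (x : X) : ℝ :=
  ∑' k, fterm π κ φ k x

include hφm hφb hB0 hρ0 hρ1 in
lemma gfun'_bdd (hA2 : ∀ k x, tvDist (kiter κ k x) π ≤ C * ρ ^ k) (x : X) :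
    |gfun' π κ φ x| ≤ 4 * B * C * (1 - ρ)⁻¹ := by
  have hs := fterm_summable π κ hφm hφb hB0 hρ0 hρ1 hA2 x
  have habs : Summable fun k => |fterm π κ φ k x| :=
    Summable.of_nonneg_of_le (fun k => abs_nonneg _)
      (fun k => fterm_bdd π κ hφm hφb hB0 hA2 k x) (geom_summable hρ0 hρ1)
  calc |gfun' π κ φ x| ≤ ∑' k, |fterm π κ φ k x| := by
        have h := norm_tsum_le_tsum_norm (f := fun k => fterm π κ φ k x)
          (by simpa [Real.norm_eq_abs] using habs)
        simpa [Real.norm_eq_abs, gfun'] using h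
  _ ≤ ∑' k : ℕ, 4 * B * (C * ρ ^ k) :=
      Summable.tsum_le_tsum (fun k => fterm_bdd π κ hφm hφb hB0 hA2 k x) habs
        (geom_summable hρ0 hρ1)
  _ = 4 * B * C * (1 - ρ)⁻¹ := by
      rw [tsum_mul_left, tsum_mul_left, tsum_geometric_of_lt_one hρ0 hρ1]; ring

include hφm hφb hB0 hρ0 hρ1 in
lemma gfun'_meas (hA2 : ∀ k x, tvDist (kiter κ k x) π ≤ C * ρ ^ k) :
    Measurable (gfun' π κ φ) := by
  have : ∀ n : ℕ, Measurable fun x => ∑ k ∈ Finset.range n, fterm π κ φ k x :=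
    fun n => Finset.measurable_sum _ fun k _ => fterm_meas π κ hφm hφb hB0 k
  refine measurable_of_tendsto_metrizable this ?_
  rw [tendsto_pi_nhds]
  intro x
  exact (fterm_summable π κ hφm hφb hB0 hρ0 hρ1 hA2 x).hasSum.tendsto_sum_nat

include hφm hφb hB0 hC0 hρ0 hρ1 in
lemma integral_gfun' (hA2 : ∀ k x, tvDist (kiter κ k x) π ≤ C * ρ ^ k)
    (μ : Measure X) [IsProbabilityMeasure μ] :
    ∫ x, gfun' π κ φ x ∂μ = ∑' k, ∫ x, fterm π κ φ k x ∂μ := by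
  show ∫ x, ∑' k, fterm π κ φ k x ∂μ = _
  refine integral_tsum (fun k => (fterm_meas π κ hφm hφb hB0 k).aestronglyMeasurable) ?_
  have hb : ∀ k : ℕ, ∫⁻ x, ‖fterm π κ φ k x‖₊ ∂μ ≤
      ENNReal.ofReal (4 * B * C) * ENNReal.ofReal ρ ^ k := by
    intro k
    calc ∫⁻ x, (‖fterm π κ φ k x‖₊ : ℝ≥0∞) ∂μ
        ≤ ∫⁻ _, ENNReal.ofReal (4 * B * (C * ρ ^ k)) ∂μ := by
          refine lintegral_mono fun x => ?_
          rw [← enorm_eq_nnnorm, ← ofReal_norm]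
          exact ENNReal.ofReal_le_ofReal
            (by simpa [Real.norm_eq_abs] using fterm_bdd π κ hφm hφb hB0 hA2 k x)
    _ = ENNReal.ofReal (4 * B * (C * ρ ^ k)) := by simp
    _ = ENNReal.ofReal (4 * B * C) * ENNReal.ofReal ρ ^ k := by
        rw [← ENNReal.ofReal_pow hρ0, ← ENNReal.ofReal_mul (by positivity)]
        congr 1
        ring
  refine ne_top_of_le_ne_top ?_ (ENNReal.tsum_le_tsum hb)
  rw [ENNReal.tsum_mul_left, ENNReal.tsum_geometric]
  refine ENNReal.mul_ne_top ENNReal.ofReal_ne_top ?_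
  rw [ENNReal.inv_ne_top]
  simp only [ne_eq, tsub_eq_zero_iff_le, not_le]
  exact lt_of_lt_of_le (ENNReal.ofReal_lt_one.2 hρ1) le_rfl

include hφm hφb hB0 hρ0 hρ1 in
lemma fterm_succ (k : ℕ) (x : X) :
    fterm π κ φ (k + 1) x = ∫ y, fterm π κ φ k y ∂(κ x) := by
  show ∫ y, cent π φ y ∂(kiter κ (k+1) x) = _
  rw [kiter_succ_apply]
  exact integral_bind_bdd (μ := κ x) (kiter κ k) (kiter κ k).measurable
    (fun y => (kiter_markov κ k).isProbabilityMeasure y)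
    (cent_meas π hφm) (cent_bdd π hφm hφb hB0)

include hφm hφb hB0 hC0 hρ0 hρ1 in
lemma gfun'_poisson (hA2 : ∀ k x, tvDist (kiter κ k x) π ≤ C * ρ ^ k) (x : X) :
    gfun' π κ φ x = cent π φ x + ∫ y, gfun' π κ φ y ∂(κ x) := by
  rw [integral_gfun' π κ hφm hφb hB0 hC0 hρ0 hρ1 hA2 (κ x)]
  have h1 : ∀ k : ℕ, ∫ y, fterm π κ φ k y ∂(κ x) = fterm π κ φ (k + 1) x :=
    fun k => (fterm_succ π κ hφm hφb hB0 hρ0 hρ1 k x).symm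
  rw [tsum_congr h1]
  have hs := fterm_summable π κ hφm hφb hB0 hρ0 hρ1 hA2 x
  rw [show gfun' π κ φ x = ∑' k, fterm π κ φ k x from rfl, hs.tsum_eq_zero_add]
  congr 1
  show fterm π κ φ 0 x = cent π φ x
  show ∫ y, cent π φ y ∂(kiter κ 0 x) = _
  rw [kiter_zero_apply]
  exact integral_dirac' _ x (cent_meas π hφm).stronglyMeasurable

include hφm hφb hB0 hC0 hρ0 hρ1 in
lemma gfun'_int_pi (hA2 : ∀ k x, tvDist (kiter κ k x) π ≤ C * ρ ^ k)
    (hinv : π.bind κ = π) : ∫ x, gfun' π κ φ x ∂π = 0 := by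
  rw [integral_gfun' π κ hφm hφb hB0 hC0 hρ0 hρ1 hA2 π]
  have h1 : ∀ k : ℕ, ∫ x, fterm π κ φ k x ∂π = 0 := by
    intro k
    induction k with
    | zero =>
      have : ∀ x, fterm π κ φ 0 x = cent π φ x := fun x => by
        show ∫ y, cent π φ y ∂(kiter κ 0 x) = _
        rw [kiter_zero_apply]
        exact integral_dirac' _ x (cent_meas π hφm).stronglyMeasurable
      rw [integral_congr_ae (ae_of_all _ this)]
      exact cent_int_pi π hφm hφb
    | succ k ih =>
      have h2 : ∀ x, fterm π κ φ (k+1) x = ∫ y, fterm π κ φ k y ∂(κ x) :=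
        fun x => fterm_succ π κ hφm hφb hB0 hρ0 hρ1 k x
      rw [integral_congr_ae (ae_of_all _ h2),
        ← integral_bind_bdd (μ := π) (B := 4 * B * (C * ρ ^ k)) κ κ.measurable
          (fun y => IsMarkovKernel.isProbabilityMeasure y)
          (fterm_meas π κ hφm hφb hB0 k)
          (fun y => fterm_bdd π κ hφm hφb hB0 hA2 k y),
        hinv, ih]
  rw [tsum_congr h1]
  simp

include hφm hφb hB0 hC0 hρ0 hρ1 in
lemma gdiff_bdd [Nonempty X] (κ' : Kernel X X) [IsMarkovKernel κ']
    (hA2 : ∀ k x, tvDist (kiter κ k x) π ≤ C * ρ ^ k)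
    (hA2' : ∀ k x, tvDist (kiter κ' k x) π ≤ C * ρ ^ k)
    (hinv : π.bind κ = π) (hinv' : π.bind κ' = π)
    {d : ℝ} (hd : 0 ≤ d) (hdist : ∀ y, tvDist (κ y) (κ' y) ≤ d)
    (m : ℕ) (hm : C * ρ ^ m ≤ 1 / 4) (x : X) :
    |gfun' π κ φ x - gfun' π κ' φ x| ≤ (4 * m * (4 * B * C * (1 - ρ)⁻¹)) * d := by
  set G : ℝ := 4 * B * C * (1 - ρ)⁻¹ with hG
  have hG0 : 0 ≤ G := by
    have : 0 ≤ (1 - ρ)⁻¹ := inv_nonneg.2 (by linarith)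
    positivity
  set h : X → ℝ := fun x => gfun' π κ φ x - gfun' π κ' φ x with hh
  have hmeas : Measurable h :=
    (gfun'_meas π κ hφm hφb hB0 hρ0 hρ1 hA2).sub (gfun'_meas π κ' hφm hφb hB0 hρ0 hρ1 hA2')
  have hbdd : ∀ y, |h y| ≤ 2 * G := fun y => by
    calc |h y| ≤ |gfun' π κ φ y| + |gfun' π κ' φ y| := abs_sub _ _
    _ ≤ G + G := add_le_add (gfun'_bdd π κ hφm hφb hB0 hρ0 hρ1 hA2 y)
        (gfun'_bdd π κ' hφm hφb hB0 hρ0 hρ1 hA2' y)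
    _ = 2 * G := by ring
  have hbd : BddAbove (Set.range fun y => |h y|) := ⟨2 * G, by rintro r ⟨y, rfl⟩; exact hbdd y⟩
  set M : ℝ := ⨆ y, |h y| with hM
  have hMle : ∀ y, |h y| ≤ M := fun y => le_ciSup hbd y
  have hM0 : 0 ≤ M := le_trans (abs_nonneg _) (hMle Classical.ofNonempty)
  have hMG : ∀ y, |h y| ≤ M := hMle
  -- one step bound
  have step : ∀ y, |h y - ∫ z, h z ∂(κ' y)| ≤ 2 * G * d := by
    intro y
    have hig : Integrable (gfun' π κ φ) (κ' y) :=
      integrable_of_bdd (gfun'_meas π κ hφm hφb hB0 hρ0 hρ1 hA2)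
        (gfun'_bdd π κ hφm hφb hB0 hρ0 hρ1 hA2)
    have hig' : Integrable (gfun' π κ' φ) (κ' y) :=
      integrable_of_bdd (gfun'_meas π κ' hφm hφb hB0 hρ0 hρ1 hA2')
        (gfun'_bdd π κ' hφm hφb hB0 hρ0 hρ1 hA2')
    have e1 : ∫ z, h z ∂(κ' y) = ∫ z, gfun' π κ φ z ∂(κ' y) - ∫ z, gfun' π κ' φ z ∂(κ' y) :=
      integral_sub hig hig'
    have e2 : h y = ∫ z, gfun' π κ φ z ∂(κ y) - ∫ z, gfun' π κ' φ z ∂(κ' y) := by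
      show gfun' π κ φ y - gfun' π κ' φ y = _
      rw [gfun'_poisson π κ hφm hφb hB0 hC0 hρ0 hρ1 hA2 y,
        gfun'_poisson π κ' hφm hφb hB0 hC0 hρ0 hρ1 hA2' y]
      ring
    rw [e1, e2]
    have e3 : ∫ z, gfun' π κ φ z ∂(κ y) - ∫ z, gfun' π κ' φ z ∂(κ' y)
        - (∫ z, gfun' π κ φ z ∂(κ' y) - ∫ z, gfun' π κ' φ z ∂(κ' y))
        = ∫ z, gfun' π κ φ z ∂(κ y) - ∫ z, gfun' π κ φ z ∂(κ' y) := by ring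
    rw [e3]
    calc |∫ z, gfun' π κ φ z ∂(κ y) - ∫ z, gfun' π κ φ z ∂(κ' y)|
        ≤ 2 * G * tvDist (κ y) (κ' y) :=
          abs_integral_sub_le (gfun'_meas π κ hφm hφb hB0 hρ0 hρ1 hA2)
            (gfun'_bdd π κ hφm hφb hB0 hρ0 hρ1 hA2)
    _ ≤ 2 * G * d := mul_le_mul_of_nonneg_left (hdist y) (by linarith)
  -- iterated bound
  have claim : ∀ j y, |h y - ∫ z, h z ∂(kiter κ' j y)| ≤ j * (2 * G * d) := by
    intro j
    induction j with
    | zero =>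
      intro y
      rw [kiter_zero_apply, integral_dirac' _ _ hmeas.stronglyMeasurable]
      simp
    | succ j ih =>
      intro y
      have hintmeas : Measurable fun z => ∫ w, h w ∂(kiter κ' j z) :=
        measurable_integral_kernel _ (kiter κ' j).measurable
          (fun z => (kiter_markov κ' j).isProbabilityMeasure z) hmeas hbdd
      have e4 : ∫ z, h z ∂(kiter κ' (j+1) y) = ∫ z, (∫ w, h w ∂(kiter κ' j z)) ∂(κ' y) := by
        rw [kiter_succ_apply]
        exact integral_bind_bdd (μ := κ' y) (kiter κ' j) (kiter κ' j).measurable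
          (fun z => (kiter_markov κ' j).isProbabilityMeasure z) hmeas hbdd
      have e5 : ∫ z, h z ∂(κ' y) - ∫ z, (∫ w, h w ∂(kiter κ' j z)) ∂(κ' y)
          = ∫ z, (h z - ∫ w, h w ∂(kiter κ' j z)) ∂(κ' y) :=
        (integral_sub (integrable_of_bdd hmeas hbdd)
          (integrable_of_bdd (B := 2 * G) hintmeas (fun z => by
            have hpz : IsProbabilityMeasure (kiter κ' j z) :=
              (kiter_markov κ' j).isProbabilityMeasure z
            have := norm_integral_le_of_norm_le_const (μ := kiter κ' j z) (f := h) (C := 2 * G)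
              (ae_of_all _ fun w => by simpa [Real.norm_eq_abs] using hbdd w)
            simpa [Real.norm_eq_abs, measure_univ] using this))).symm
      have e6 : |∫ z, (h z - ∫ w, h w ∂(kiter κ' j z)) ∂(κ' y)| ≤ j * (2 * G * d) := by
        have := norm_integral_le_of_norm_le_const (μ := κ' y)
          (f := fun z => h z - ∫ w, h w ∂(kiter κ' j z)) (C := j * (2 * G * d))
          (ae_of_all _ fun z => by simpa [Real.norm_eq_abs] using ih z)
        simpa [Real.norm_eq_abs, measure_univ] using this
      calc |h y - ∫ z, h z ∂(kiter κ' (j+1) y)|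
          = |(h y - ∫ z, h z ∂(κ' y)) + (∫ z, h z ∂(κ' y) - ∫ z, h z ∂(kiter κ' (j+1) y))| := by
            ring_nf
      _ ≤ |h y - ∫ z, h z ∂(κ' y)| + |∫ z, h z ∂(κ' y) - ∫ z, h z ∂(kiter κ' (j+1) y)| :=
            abs_add_le _ _
      _ ≤ 2 * G * d + j * (2 * G * d) := by
            refine add_le_add (step y) ?_
            rw [e4, e5]
            exact e6
      _ = (j + 1 : ℕ) * (2 * G * d) := by push_cast; ring
  -- π-integral of h is zero
  have hπ : ∫ z, h z ∂π = 0 := by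
    rw [hh]
    rw [integral_sub
      (integrable_of_bdd (gfun'_meas π κ hφm hφb hB0 hρ0 hρ1 hA2)
        (gfun'_bdd π κ hφm hφb hB0 hρ0 hρ1 hA2))
      (integrable_of_bdd (gfun'_meas π κ' hφm hφb hB0 hρ0 hρ1 hA2')
        (gfun'_bdd π κ' hφm hφb hB0 hρ0 hρ1 hA2')),
      gfun'_int_pi π κ hφm hφb hB0 hC0 hρ0 hρ1 hA2 hinv,
      gfun'_int_pi π κ' hφm hφb hB0 hC0 hρ0 hρ1 hA2' hinv']
    ring
  -- final bound
  have final : ∀ y, |h y| ≤ m * (2 * G * d) + M / 2 := by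
    intro y
    have hpm : IsProbabilityMeasure (kiter κ' m y) := (kiter_markov κ' m).isProbabilityMeasure y
    have t1 : |∫ z, h z ∂(kiter κ' m y)| ≤ 2 * M * (C * ρ ^ m) := by
      have := abs_integral_sub_le (μ := kiter κ' m y) (ν := π) hmeas hMG
      rw [hπ, sub_zero] at this
      calc |∫ z, h z ∂(kiter κ' m y)| ≤ 2 * M * tvDist (kiter κ' m y) π := this
      _ ≤ 2 * M * (C * ρ ^ m) := mul_le_mul_of_nonneg_left (hA2' m y) (by linarith)
    have t2 : 2 * M * (C * ρ ^ m) ≤ M / 2 := by nlinarith [hA2' m y]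
    calc |h y| ≤ |h y - ∫ z, h z ∂(kiter κ' m y)| + |∫ z, h z ∂(kiter κ' m y)| := by
          have := abs_add_le (h y - ∫ z, h z ∂(kiter κ' m y)) (∫ z, h z ∂(kiter κ' m y))
          simpa using this
    _ ≤ m * (2 * G * d) + M / 2 := add_le_add (claim m y) (le_trans t1 t2)
  have hMfin : M ≤ m * (2 * G * d) + M / 2 := ciSup_le final
  have hMle2 : M ≤ 4 * m * G * d := by linarith
  calc |gfun' π κ φ x - gfun' π κ' φ x| = |h x| := rfl
  _ ≤ M := hMG x
  _ ≤ 4 * m * G * d := hMle2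
  _ = (4 * m * G) * d := by ring

end Gfun

lemma gfun_eq_gfun' {S X : Type*} [MeasurableSpace X] (P : S → X → Measure X)
    (π : Measure X) (φ : X → ℝ) (s : S) (κ : Kernel X X) (hκ : ∀ x, κ x = P s x) (x : X) :
    gfun P π φ s x = gfun' π κ φ x :=
  tsum_congr fun k => by
    show ∫ y, (φ y - ∫ z, φ z ∂π) ∂(iterK P s k x) = _
    rw [iterK_eq_kiter P s κ hκ k x]
    rfl

/-- Under (A1), (A2) and weak (resp. strong) `p`-waning
adaptation (A5), the adaptation term satisfies `A_n/n^p → 0` in probability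
(resp. almost surely). -/
theorem stmt6 {S X : Type*} [MeasurableSpace S] [MeasurableSpace X]
    (P : S → X → Measure X) (π : Measure X) [IsProbabilityMeasure π]
    (hPprob : ∀ s x, IsProbabilityMeasure (P s x))
    (hPmeas : ∀ A : Set X, MeasurableSet A → Measurable fun p : S × X => P p.1 p.2 A)
    (hinv : ∀ s, π.bind (P s) = π)
    (C ρ : ℝ) (hρ : ρ ∈ Set.Ico (0 : ℝ) 1)
    (hA2 : ∀ s x k, tvDist (iterK P s k x) π ≤ C * ρ ^ k)
    {Ω : Type*} [mΩ : MeasurableSpace Ω] (μ : Measure Ω) [IsProbabilityMeasure μ]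
    (F : Filtration ℕ mΩ) (Sp : ℕ → Ω → S) (Xp : ℕ → Ω → X)
    (hadapted : ∀ k, Measurable[F k] fun ω => (Sp k ω, Xp k ω))
    (hmarkov : ∀ (k : ℕ) (A : Set X), MeasurableSet A →
      μ[fun ω => A.indicator (fun _ => (1 : ℝ)) (Xp (k + 1) ω) | F k]
        =ᵐ[μ] fun ω => (P (Sp k ω) (Xp k ω) A).toReal)
    (φ : X → ℝ) (hφm : Measurable φ) (hφb : ∃ B, ∀ x, |φ x| ≤ B)
    (p : ℝ) (hp : 0 < p)
    (D : ℕ → Ω → ℝ) (hD01 : ∀ k ω, D k ω ∈ Set.Icc (0 : ℝ) 1)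
    (hDbound : ∀ k, 1 ≤ k → ∀ ω x,
      tvDist (P (Sp k ω) x) (P (Sp (k - 1) ω) x) ≤ D k ω) :
    (TendstoInMeasure μ (fun n ω => (∑ k ∈ Finset.Icc 1 n, D k ω) / (n : ℝ) ^ p)
        atTop (fun _ => 0) →
      TendstoInMeasure μ (fun n ω => (∑ k ∈ Finset.Icc 1 n,
          (gfun P π φ (Sp k ω) (Xp k ω) - gfun P π φ (Sp (k - 1) ω) (Xp k ω))) / (n : ℝ) ^ p)
        atTop (fun _ => 0)) ∧
    ((∀ᵐ ω ∂μ, Tendsto (fun n : ℕ => (∑ k ∈ Finset.Icc 1 n, D k ω) / (n : ℝ) ^ p)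
        atTop (𝓝 0)) →
      ∀ᵐ ω ∂μ, Tendsto (fun n : ℕ => (∑ k ∈ Finset.Icc 1 n,
          (gfun P π φ (Sp k ω) (Xp k ω) - gfun P π φ (Sp (k - 1) ω) (Xp k ω))) / (n : ℝ) ^ p)
        atTop (𝓝 0)) := by
  -- basic facts
  have hρ0 : 0 ≤ ρ := hρ.1
  have hρ1 : ρ < 1 := hρ.2
  obtain ⟨B, hφb⟩ := hφb
  haveI hXne : Nonempty X := MeasureTheory.Measure.nonempty_of_neZero π
  have hB0 : 0 ≤ B := le_trans (abs_nonneg _) (hφb Classical.ofNonempty)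
  haveI hΩne : Nonempty Ω := MeasureTheory.Measure.nonempty_of_neZero μ
  haveI hSne : Nonempty S := ⟨Sp 0 Classical.ofNonempty⟩
  -- the kernels
  let ker : S → Kernel X X := fun s =>
    ⟨P s, Measure.measurable_of_measurable_coe _ fun A hA =>
      (hPmeas A hA).comp (measurable_const.prodMk measurable_id)⟩
  haveI hkermk : ∀ s, IsMarkovKernel (ker s) := fun s => ⟨fun x => hPprob s x⟩
  have hA2k : ∀ s (k : ℕ) (x : X), tvDist (kiter (ker s) k x) π ≤ C * ρ ^ k := fun s k x => by
    rw [← iterK_eq_kiter P s (ker s) (fun x => rfl) k x]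
    exact hA2 s x k
  have hC0 : 0 ≤ C := by
    have h1 := hA2 Classical.ofNonempty Classical.ofNonempty 0
    have heq : iterK P Classical.ofNonempty 0 Classical.ofNonempty
        = Measure.dirac (Classical.ofNonempty : X) := rfl
    rw [heq] at h1
    have h2 : (0:ℝ) ≤ tvDist (Measure.dirac (Classical.ofNonempty : X)) π :=
      tvDist_nonneg _ _
    simpa using le_trans h2 h1
  have hinvk : ∀ s, π.bind ⇑(ker s) = π := fun s => hinv s
  -- choose m with C * ρ ^ m ≤ 1/4
  obtain ⟨m, hm⟩ : ∃ m : ℕ, C * ρ ^ m ≤ 1 / 4 := by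
    rcases le_or_gt C (1/4) with h | h
    · exact ⟨0, by simpa using h⟩
    · obtain ⟨m, hm⟩ := exists_pow_lt_of_lt_one (x := 1/(4*C)) (by positivity) hρ1
      refine ⟨m, ?_⟩
      have : C * ρ ^ m < C * (1/(4*C)) :=
        mul_lt_mul_of_pos_left hm (by linarith)
      have hCne : C ≠ 0 := by linarith
      calc C * ρ ^ m ≤ C * (1/(4*C)) := this.le
      _ = 1/4 := by field_simp
  set G : ℝ := 4 * B * C * (1 - ρ)⁻¹ with hGdef
  set K : ℝ := max 1 (4 * m * G) with hKdef
  have hK1 : (1:ℝ) ≤ K := le_max_left _ _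
  have hK0 : (0:ℝ) < K := lt_of_lt_of_le one_pos hK1
  -- the key pointwise bound
  have key : ∀ (k : ℕ), 1 ≤ k → ∀ ω,
      |gfun P π φ (Sp k ω) (Xp k ω) - gfun P π φ (Sp (k-1) ω) (Xp k ω)| ≤ K * D k ω := by
    intro k hk ω
    rw [gfun_eq_gfun' P π φ _ (ker (Sp k ω)) (fun x => rfl),
      gfun_eq_gfun' P π φ _ (ker (Sp (k-1) ω)) (fun x => rfl)]
    have hb := gdiff_bdd π (ker (Sp k ω)) hφm hφb hB0 hC0 hρ0 hρ1 (ker (Sp (k-1) ω))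
      (hA2k _) (hA2k _) (hinvk _) (hinvk _) (hD01 k ω).1
      (fun y => hDbound k hk ω y) m hm (Xp k ω)
    calc |gfun' π (ker (Sp k ω)) φ (Xp k ω) - gfun' π (ker (Sp (k-1) ω)) φ (Xp k ω)|
        ≤ (4 * m * G) * D k ω := hb
    _ ≤ K * D k ω := mul_le_mul_of_nonneg_right (le_max_right _ _) (hD01 k ω).1
  -- nonnegativity of the dominating sequence
  have hub : ∀ (n : ℕ) ω, 0 ≤ (∑ k ∈ Finset.Icc 1 n, D k ω) / (n:ℝ) ^ p := fun n ω =>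
    div_nonneg (Finset.sum_nonneg fun k _ => (hD01 k ω).1)
      (Real.rpow_nonneg (Nat.cast_nonneg n) p)
  -- the domination
  have habs : ∀ (n : ℕ) ω,
      |(∑ k ∈ Finset.Icc 1 n,
          (gfun P π φ (Sp k ω) (Xp k ω) - gfun P π φ (Sp (k - 1) ω) (Xp k ω))) / (n : ℝ) ^ p|
        ≤ K * ((∑ k ∈ Finset.Icc 1 n, D k ω) / (n : ℝ) ^ p) := by
    intro n ω
    have hnum : |∑ k ∈ Finset.Icc 1 n,
        (gfun P π φ (Sp k ω) (Xp k ω) - gfun P π φ (Sp (k - 1) ω) (Xp k ω))|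
        ≤ K * ∑ k ∈ Finset.Icc 1 n, D k ω := by
      calc |∑ k ∈ Finset.Icc 1 n,
          (gfun P π φ (Sp k ω) (Xp k ω) - gfun P π φ (Sp (k - 1) ω) (Xp k ω))|
          ≤ ∑ k ∈ Finset.Icc 1 n,
            |gfun P π φ (Sp k ω) (Xp k ω) - gfun P π φ (Sp (k - 1) ω) (Xp k ω)| :=
            Finset.abs_sum_le_sum_abs _ _
      _ ≤ ∑ k ∈ Finset.Icc 1 n, K * D k ω :=
          Finset.sum_le_sum fun k hk => key k (Finset.mem_Icc.1 hk).1 ω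
      _ = K * ∑ k ∈ Finset.Icc 1 n, D k ω := (Finset.mul_sum _ _ _).symm
    rcases eq_or_lt_of_le (Real.rpow_nonneg (Nat.cast_nonneg n) p : (0:ℝ) ≤ (n:ℝ) ^ p)
      with h0 | hpos
    · rw [← h0]
      simp
    · rw [abs_div, abs_of_pos hpos, mul_div_assoc']
      exact (div_le_div_iff_of_pos_right hpos).2 hnum
  constructor
  · -- in probability
    intro hu
    rw [tendstoInMeasure_iff_dist] at hu ⊢
    intro ε hε
    have hw := hu (ε/K) (div_pos hε hK0)
    refine tendsto_of_tendsto_of_tendsto_of_le_of_le tendsto_const_nhds hw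
      (fun n => zero_le) (fun n => measure_mono ?_)
    intro ω hω
    simp only [Set.mem_setOf_eq, Real.dist_eq, sub_zero] at hω ⊢
    have h1 : ε ≤ K * ((∑ k ∈ Finset.Icc 1 n, D k ω) / (n : ℝ) ^ p) :=
      le_trans hω (habs n ω)
    rw [abs_of_nonneg (hub n ω)]
    rw [div_le_iff₀ hK0]
    linarith
  · -- almost surely
    intro ha
    filter_upwards [ha] with ω hω
    refine squeeze_zero_norm (a := fun n => K * ((∑ k ∈ Finset.Icc 1 n, D k ω) / (n:ℝ) ^ p))
      (fun n => ?_) ?_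
    · rw [Real.norm_eq_abs]
      exact habs n ω
    · have h2 := hω.const_mul K
      simpa using h2
end

section
/- Assume the adaptation has the stochastic-approximation form S_k = S_{k−1} + γ_k H_k and that (A7) holds with Lipschitz constant L. If Σ_{k=1}^∞ (γ_k/k^p) E[‖H_k‖] < ∞ for some p > 0, then the adaptation is strongly p-waning: the random variables D_k = min{1, L γ_k ‖H_k‖} satisfy sup_{x∈X} d_TV(P_{S_k}(x,·), P_{S_{k−1}}(x,·)) ≤ D_k and n^{−p} Σ_{k=1}^n D_k → 0 almost surely. -/
open MeasureTheory Filter Finset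
open scoped ENNReal NNReal Topology

lemma tvDist_le_one {X : Type*} [MeasurableSpace X] (μ ν : Measure X)
    [IsProbabilityMeasure μ] [IsProbabilityMeasure ν] : tvDist μ ν ≤ 1 := by
  refine ciSup_le fun A => ?_
  have h1 : (μ A.1).toReal ≤ 1 := by
    have := ENNReal.toReal_mono (measure_ne_top μ Set.univ) (measure_mono (Set.subset_univ A.1))
    simpa using this
  have h2 : (ν A.1).toReal ≤ 1 := by
    have := ENNReal.toReal_mono (measure_ne_top ν Set.univ) (measure_mono (Set.subset_univ A.1))
    simpa using this
  rw [abs_sub_le_iff]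
  constructor <;> nlinarith [ENNReal.toReal_nonneg (a := μ A.1), ENNReal.toReal_nonneg (a := ν A.1)]

/-- Kronecker-type Cesàro lemma. -/
lemma cesaro_rpow {b : ℕ → ℝ} (hb : ∀ k, 0 ≤ b k) {p : ℝ} (hp : 0 < p)
    (hsum : Summable fun k : ℕ => b k / ((k : ℝ) + 1) ^ p) :
    Tendsto (fun n : ℕ => (∑ j ∈ Finset.range n, b j) / (n : ℝ) ^ p) atTop (𝓝 0) := by
  set a : ℕ → ℝ := fun k => b k / ((k : ℝ) + 1) ^ p with ha
  have hapos : ∀ k, 0 ≤ a k := fun k => div_nonneg (hb k) (by positivity)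
  rw [Metric.tendsto_atTop]
  intro ε hε
  have htail : Tendsto (fun m => ∑' k, a (k + m)) atTop (𝓝 0) := tendsto_sum_nat_add a
  obtain ⟨m, hm⟩ := (htail.eventually (gt_mem_nhds (half_pos hε))).exists
  set C := ∑ j ∈ Finset.range m, b j with hC
  have hCnn : 0 ≤ C := Finset.sum_nonneg fun _ _ => hb _
  have hdiv : Tendsto (fun n : ℕ => C / (n : ℝ) ^ p) atTop (𝓝 0) :=
    Tendsto.div_atTop tendsto_const_nhds
      ((tendsto_rpow_atTop hp).comp tendsto_natCast_atTop_atTop)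
  obtain ⟨N₀, hN₀⟩ := (Metric.tendsto_atTop.1 hdiv) (ε / 2) (half_pos hε)
  refine ⟨max (max N₀ m) 1, fun n hn => ?_⟩
  have hnm : m ≤ n := le_trans (le_trans (le_max_right _ _) (le_max_left _ _)) hn
  have hn1 : 1 ≤ n := le_trans (le_max_right _ _) hn
  have hnN : N₀ ≤ n := le_trans (le_trans (le_max_left _ _) (le_max_left _ _)) hn
  have hnp : (0:ℝ) < (n : ℝ) ^ p := by
    apply Real.rpow_pos_of_pos
    exact_mod_cast Nat.lt_of_lt_of_le Nat.zero_lt_one hn1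
  have hsplit : ∑ j ∈ Finset.range n, b j = C + ∑ j ∈ Finset.Ico m n, b j := by
    rw [hC, Finset.range_eq_Ico, Finset.range_eq_Ico]
    exact (Finset.sum_Ico_consecutive b (Nat.zero_le m) hnm).symm
  have hbound : ∑ j ∈ Finset.Ico m n, b j ≤ (n : ℝ) ^ p * ∑' k, a (k + m) := by
    have step1 : ∑ j ∈ Finset.Ico m n, b j ≤ ∑ j ∈ Finset.Ico m n, (n : ℝ) ^ p * a j := by
      refine Finset.sum_le_sum fun j hj => ?_
      have hj' : j < n := (Finset.mem_Ico.1 hj).2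
      have hbj : b j = a j * ((j : ℝ) + 1) ^ p := by
        rw [ha]; field_simp
      rw [hbj, mul_comm ((n:ℝ) ^ p)]
      refine mul_le_mul_of_nonneg_left ?_ (hapos j)
      refine Real.rpow_le_rpow (by positivity) ?_ hp.le
      exact_mod_cast hj'
    rw [← Finset.mul_sum] at step1
    refine step1.trans (mul_le_mul_of_nonneg_left ?_ hnp.le)
    have : ∑ j ∈ Finset.Ico m n, a j = ∑ k ∈ Finset.range (n - m), a (k + m) := by
      rw [Finset.sum_Ico_eq_sum_range]
      exact Finset.sum_congr rfl fun k _ => by rw [add_comm]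
    rw [this]
    exact Summable.sum_le_tsum _ (fun k _ => hapos _) ((summable_nat_add_iff m).2 hsum)
  have hval : |(∑ j ∈ Finset.range n, b j) / (n : ℝ) ^ p - 0| =
      (∑ j ∈ Finset.range n, b j) / (n : ℝ) ^ p := by
    rw [sub_zero, abs_of_nonneg]
    exact div_nonneg (Finset.sum_nonneg fun _ _ => hb _) hnp.le
  rw [Real.dist_eq, hval, hsplit, add_div]
  have h1 : C / (n : ℝ) ^ p < ε / 2 := by
    have := hN₀ n hnN
    rw [Real.dist_eq, sub_zero, abs_of_nonneg (div_nonneg hCnn hnp.le)] at this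
    exact this
  have h2 : (∑ j ∈ Finset.Ico m n, b j) / (n : ℝ) ^ p ≤ ∑' k, a (k + m) := by
    rw [div_le_iff₀ hnp]
    linarith [hbound]
  linarith

lemma sum_Icc_one_eq_sum_range (g : ℕ → ℝ) (n : ℕ) :
    ∑ k ∈ Finset.Icc 1 n, g k = ∑ j ∈ Finset.range n, g (j + 1) := by
  rw [← Finset.Ico_add_one_right_eq_Icc, Finset.sum_Ico_eq_sum_range]
  refine Finset.sum_congr (by norm_num) fun k _ => by rw [add_comm]

/-- If the adaptation has the stochastic-approximation form
`S_k = S_{k-1} + γ_k H_k` and (A7) holds with Lipschitz constant `L`, and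
`Σ_{k=1}^∞ (γ_k/k^p) E[‖H_k‖] < ∞` for some `p > 0`, then the adaptation is
strongly `p`-waning: the random variables `D_k = min{1, L γ_k ‖H_k‖}` dominate
`sup_x d_TV(P_{S_k}(x,·), P_{S_{k-1}}(x,·))` and
`n^{-p} Σ_{k=1}^n D_k → 0` almost surely. -/
theorem stmt13 {E X : Type*} [NormedAddCommGroup E] [NormedSpace ℝ E]
    [MeasurableSpace E] [BorelSpace E] [MeasurableSpace X]
    (P : E → X → Measure X)
    (hPprob : ∀ s x, IsProbabilityMeasure (P s x))
    (hPmeas : ∀ A : Set X, MeasurableSet A → Measurable fun p : E × X => P p.1 p.2 A)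
    {Ω : Type*} [mΩ : MeasurableSpace Ω] (μ : Measure Ω) [IsProbabilityMeasure μ]
    (F : Filtration ℕ mΩ)
    (Sset : Set E) (Sp : ℕ → Ω → E) (hSmem : ∀ k ω, Sp k ω ∈ Sset)
    (hSadapted : ∀ k, Measurable[F k] (Sp k))
    (γ : ℕ → ℝ) (hγ : ∀ k, 0 < γ k)
    (H : ℕ → Ω → E) (hHmeas : ∀ k, Measurable[F k] (H k))
    (hHint : ∀ k, Integrable (fun ω => ‖H k ω‖) μ)
    (hSA : ∀ k, 1 ≤ k → ∀ ω, Sp k ω = Sp (k - 1) ω + γ k • H k ω)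
    (L : ℝ)
    (hA7 : ∀ s ∈ Sset, ∀ s' ∈ Sset, ∀ x, tvDist (P s x) (P s' x) ≤ L * ‖s - s'‖)
    (p : ℝ) (hp : 0 < p)
    (h : Summable fun k : ℕ =>
      γ (k + 1) / ((k : ℝ) + 1) ^ p * ∫ ω, ‖H (k + 1) ω‖ ∂μ) :
    (∀ k, 1 ≤ k → ∀ ω x, tvDist (P (Sp k ω) x) (P (Sp (k - 1) ω) x)
        ≤ min 1 (L * γ k * ‖H k ω‖)) ∧
    (∀ᵐ ω ∂μ, Tendsto
      (fun n : ℕ => (∑ k ∈ Finset.Icc 1 n, min 1 (L * γ k * ‖H k ω‖)) / (n : ℝ) ^ p)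
      atTop (𝓝 0)) := by
  constructor
  · intro k hk ω x
    haveI := hPprob (Sp k ω) x
    haveI := hPprob (Sp (k - 1) ω) x
    have hT1 : tvDist (P (Sp k ω) x) (P (Sp (k - 1) ω) x) ≤ 1 := tvDist_le_one _ _
    have hdiff : Sp k ω - Sp (k - 1) ω = γ k • H k ω := by
      rw [hSA k hk ω]; abel
    have h2 := hA7 (Sp k ω) (hSmem k ω) (Sp (k - 1) ω) (hSmem (k - 1) ω) x
    rw [hdiff, norm_smul, Real.norm_eq_abs, abs_of_pos (hγ k)] at h2
    exact le_min hT1 (by rw [mul_assoc]; exact h2)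
  · -- almost sure convergence
    set f : ℕ → Ω → ℝ := fun k ω => min 1 (L * γ k * ‖H k ω‖) with hf
    have hfabs : ∀ k ω, |f k ω| ≤ |L| * γ k * ‖H k ω‖ := by
      intro k ω
      have hx : L * γ k * ‖H k ω‖ ≤ |L| * γ k * ‖H k ω‖ := by
        apply mul_le_mul_of_nonneg_right _ (norm_nonneg _)
        exact mul_le_mul_of_nonneg_right (le_abs_self L) (hγ k).le
      have hxn : -(|L| * γ k * ‖H k ω‖) ≤ L * γ k * ‖H k ω‖ := by
        have : -(|L| * γ k * ‖H k ω‖) ≤ -|L * γ k * ‖H k ω‖| := by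
          simp only [neg_le_neg_iff, abs_mul, abs_abs, abs_of_pos (hγ k), abs_norm, le_refl]
        exact this.trans (neg_abs_le _)
      rw [abs_le]
      have hnn : 0 ≤ |L| * γ k * ‖H k ω‖ := mul_nonneg (mul_nonneg (abs_nonneg L) (hγ k).le) (norm_nonneg _)
      exact ⟨le_min (by linarith) hxn, (min_le_right _ _).trans hx⟩
    -- measurability of |f k| on Ω
    have hfm : ∀ k, Measurable fun ω => |f k ω| := by
      intro k
      have hH : Measurable fun ω => ‖H k ω‖ := ((hHmeas k).mono (F.le k) le_rfl).norm
      exact (measurable_const.min (hH.const_mul (L * γ k))).abs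
    -- a.e. summability of |f (j+1) ω| / (j+1)^p
    set gq : ℕ → Ω → ℝ := fun j ω => |f (j + 1) ω| / ((j : ℝ) + 1) ^ p with hgq
    have hgqnn : ∀ j ω, 0 ≤ gq j ω := fun j ω => div_nonneg (abs_nonneg _) (by positivity)
    have hgqm : ∀ j, Measurable fun ω => ENNReal.ofReal (gq j ω) := by
      intro j
      exact ((hfm (j + 1)).div_const _).ennreal_ofReal
    set c : ℕ → ℝ := fun j => |L| * (γ (j + 1) / ((j : ℝ) + 1) ^ p * ∫ ω, ‖H (j + 1) ω‖ ∂μ)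
      with hc
    have hcnn : ∀ j, 0 ≤ c j := by
      intro j
      have : 0 ≤ ∫ ω, ‖H (j + 1) ω‖ ∂μ := integral_nonneg fun ω => norm_nonneg _
      have hγd : 0 ≤ γ (j + 1) / ((j : ℝ) + 1) ^ p := div_nonneg (hγ _).le (by positivity)
      positivity
    have hcs : Summable c := h.mul_left |L|
    have hptwise : ∀ j, ∫⁻ ω, ENNReal.ofReal (gq j ω) ∂μ ≤ ENNReal.ofReal (c j) := by
      intro j
      set d : ℝ := |L| * γ (j + 1) / ((j : ℝ) + 1) ^ p with hd
      have hdnn : 0 ≤ d := by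
        rw [hd]
        have := (hγ (j + 1)).le
        positivity
      have hstep : ∀ ω, ENNReal.ofReal (gq j ω) ≤ ENNReal.ofReal (d * ‖H (j + 1) ω‖) := by
        intro ω
        apply ENNReal.ofReal_le_ofReal
        rw [hgq]
        have := hfabs (j + 1) ω
        rw [div_le_iff₀ (by positivity : (0:ℝ) < ((j : ℝ) + 1) ^ p), hd]
        calc |f (j + 1) ω| ≤ |L| * γ (j + 1) * ‖H (j + 1) ω‖ := this
          _ = |L| * γ (j + 1) / ((j : ℝ) + 1) ^ p * ‖H (j + 1) ω‖ * ((j : ℝ) + 1) ^ p := by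
              field_simp
      calc ∫⁻ ω, ENNReal.ofReal (gq j ω) ∂μ
          ≤ ∫⁻ ω, ENNReal.ofReal (d * ‖H (j + 1) ω‖) ∂μ := lintegral_mono hstep
        _ = ENNReal.ofReal (∫ ω, d * ‖H (j + 1) ω‖ ∂μ) := by
            rw [MeasureTheory.ofReal_integral_eq_lintegral_ofReal ((hHint (j + 1)).const_mul d)
              (Filter.Eventually.of_forall fun ω => by positivity)]
        _ = ENNReal.ofReal (c j) := by
            rw [integral_const_mul, hc, hd]
            congr 1
            ring
    have hkey : ∫⁻ ω, ∑' j, ENNReal.ofReal (gq j ω) ∂μ ≠ ∞ := by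
      rw [lintegral_tsum fun j => (hgqm j).aemeasurable]
      refine ne_top_of_le_ne_top ?_ (ENNReal.tsum_le_tsum hptwise)
      rw [← ENNReal.ofReal_tsum_of_nonneg hcnn hcs]
      exact ENNReal.ofReal_ne_top
    have hae : ∀ᵐ ω ∂μ, Summable fun j => gq j ω := by
      have h2 := ae_lt_top' (AEMeasurable.ennreal_tsum fun j => (hgqm j).aemeasurable) hkey
      filter_upwards [h2] with ω hω
      have hs := ENNReal.summable_toReal hω.ne
      refine hs.congr fun j => ?_
      exact ENNReal.toReal_ofReal (hgqnn j ω)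
    filter_upwards [hae] with ω hω
    have hb := cesaro_rpow (b := fun j => |f (j + 1) ω|) (fun j => abs_nonneg _) hp hω
    refine squeeze_zero_norm (fun n => ?_) hb
    rw [sum_Icc_one_eq_sum_range (fun k => min 1 (L * γ k * ‖H k ω‖)) n]
    rcases Nat.eq_zero_or_pos n with hn | hn
    · subst hn; simp
    · have hnp : (0:ℝ) < (n : ℝ) ^ p := Real.rpow_pos_of_pos (by exact_mod_cast hn) p
      rw [Real.norm_eq_abs, abs_div, abs_of_pos hnp]
      gcongr
      exact Finset.abs_sum_le_sum_abs _ _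
end
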